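/- For the black edge ℓ = e₁ − e₂, the squared coefficient c(ℓ)² = (q+1)² ξ₁ ξ₂ (Σ_{α ∈ ℕ^m, |α|₁ = q−1} multinomial(q, α₁+1, α₂,...,α_m) multinomial(q, α₁, α₂+1,...,α_m) ξ^α)², evaluated at ξ₁ = ξ₂, contains the monomial (q+1)² q⁴ ξ₁² ξ₃^{2(q−1)}; hence for a prime power p^k exactly dividing q+1 (q+1 = p^k u with gcd(p,u)=1 and m ≥ 3), c(ℓ)²|_{ξ₁=ξ₂} is not divisible by p^{4k}. -/

import Mathlib

open Finset MvPolynomial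

private lemma mult_aux {σ : Type*} [Fintype σ] [DecidableEq σ] (n : ℕ) (a b : σ)
    (hab : a ≠ b) :
    Nat.multinomial Finset.univ
      (fun j => (if j = b then n else 0) + if j = a then 1 else 0) = n + 1 := by
  set g : σ → ℕ := fun j => (if j = b then n else 0) + if j = a then 1 else 0 with hg
  have hsum : ∑ j, g j = n + 1 := by
    simp [hg, Finset.sum_add_distrib, Finset.sum_ite_eq']
  have hprod : ∏ j, (g j).factorial = n.factorial := by
    rw [Finset.prod_eq_single b]
    · simp [hg, Ne.symm hab]
    · intro j _ hj
      have : g j = if j = a then 1 else 0 := by simp [hg, hj]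
      rw [this]; split <;> simp
    · simp
  have hspec := Nat.multinomial_spec Finset.univ g
  rw [hprod, hsum, Nat.factorial_succ, mul_comm (n+1)] at hspec
  exact Nat.eq_of_mul_eq_mul_left (Nat.factorial_pos n) hspec

/-- for the black edge ℓ = e₁ − e₂,
c(ℓ)² = (q+1)² ξ₁ξ₂ (Σ_{|α|₁=q−1} multinomial(q,α+e₁) multinomial(q,α+e₂) ξ^α)²,
evaluated at ξ₁ = ξ₂ (rename ξ₂ ↦ ξ₁), contains the monomial
(q+1)² q⁴ ξ₁² ξ₃^{2(q−1)}; hence if q+1 = p^k u with p prime, gcd(p,u) = 1 and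
k ≥ 1 (and m ≥ 3), then c(ℓ)²|_{ξ₁=ξ₂} is not divisible by p^{4k}. -/
theorem csq_not_div_p4k (q m : ℕ) (hq : 1 ≤ q) (hm : 3 ≤ m) :
    let i0 : Fin m := ⟨0, by omega⟩
    let i1 : Fin m := ⟨1, by omega⟩
    let i2 : Fin m := ⟨2, by omega⟩
    let S : MvPolynomial (Fin m) ℤ :=
      ∑ α ∈ (Fintype.piFinset fun _ : Fin m => Finset.range q).filter
          (fun α => ∑ i, α i = q - 1),
        MvPolynomial.C
            ((Nat.multinomial Finset.univ
                (fun j => α j + if j = i0 then 1 else 0) : ℤ) *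
              (Nat.multinomial Finset.univ
                (fun j => α j + if j = i1 then 1 else 0) : ℤ)) *
          ∏ i, MvPolynomial.X i ^ α i
    let csq : MvPolynomial (Fin m) ℤ :=
      MvPolynomial.C (((q : ℤ) + 1) ^ 2) *
        MvPolynomial.X i0 * MvPolynomial.X i1 * S ^ 2
    let csqDiag : MvPolynomial (Fin m) ℤ :=
      MvPolynomial.rename (fun j => if j = i1 then i0 else j) csq
    MvPolynomial.coeff
        (Finsupp.single i0 2 + Finsupp.single i2 (2 * (q - 1))) csqDiag =
      ((q : ℤ) + 1) ^ 2 * (q : ℤ) ^ 4 ∧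
    ∀ p k u : ℕ, p.Prime → 1 ≤ k → q + 1 = p ^ k * u → ¬ p ∣ u →
      ¬ ∃ Q : MvPolynomial (Fin m) ℤ, csqDiag = (p : ℤ) ^ (4 * k) • Q := by
  intro i0 i1 i2 S csq csqDiag
  have h01 : i0 ≠ i1 := by simp [i0, i1, Fin.ext_iff]
  have h12 : i1 ≠ i2 := by simp [i1, i2, Fin.ext_iff]
  have h02 : i0 ≠ i2 := by simp [i0, i2, Fin.ext_iff]
  set f : Fin m → Fin m := fun j => if j = i1 then i0 else j with hf
  have hfne : ∀ i : Fin m, i ≠ i2 → f i ≠ i2 := by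
    intro i hi
    simp only [hf]
    split
    · exact h02
    · exact hi
  have hfi2 : f i2 = i2 := by simp [hf, (h12.symm : i2 ≠ i1)]
  set α₀ : Fin m → ℕ := fun i => if i = i2 then q - 1 else 0 with hα₀
  set A := (Fintype.piFinset fun _ : Fin m => Finset.range q).filter
      (fun α => ∑ i, α i = q - 1) with hA
  set c : (Fin m → ℕ) → ℤ := fun α =>
      ((Nat.multinomial Finset.univ (fun j => α j + if j = i0 then 1 else 0) : ℤ) *
       (Nat.multinomial Finset.univ (fun j => α j + if j = i1 then 1 else 0) : ℤ)) with hc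
  set D : (Fin m → ℕ) → (Fin m →₀ ℕ) := fun α => ∑ i, Finsupp.single (f i) (α i) with hD
  have hmem : α₀ ∈ A := by
    simp only [hA, Finset.mem_filter, Fintype.mem_piFinset, Finset.mem_range]
    constructor
    · intro i; simp only [hα₀]; split <;> omega
    · simp [hα₀, Finset.sum_ite_eq']
  have hDα₀ : D α₀ = Finsupp.single i2 (q - 1) := by
    rw [hD]
    dsimp only
    rw [Finset.sum_eq_single i2]
    · rw [hfi2]; simp [hα₀]
    · intro b _ hb; simp [hα₀, hb]
    · simp
  have hDD : D α₀ + D α₀ = Finsupp.single i2 (2 * (q - 1)) := by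
    rw [hDα₀, ← Finsupp.single_add, two_mul]
  have hzero : ∀ γ : Fin m → ℕ, γ ∈ A → (∀ i, i ≠ i2 → γ i = 0) → γ = α₀ := by
    intro γ hγ h0
    have hs : ∑ i, γ i = q - 1 := (Finset.mem_filter.mp hγ).2
    rw [Finset.sum_eq_single_of_mem i2 (Finset.mem_univ _)
        (fun b _ hb => h0 b hb)] at hs
    funext i
    by_cases hi : i = i2
    · rw [hi, hα₀]; simp [hs]
    · rw [h0 i hi, hα₀]; simp [hi]
  have huniq : ∀ α β : Fin m → ℕ, α ∈ A → β ∈ A →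
      D α + D β = Finsupp.single i2 (2 * (q - 1)) → α = α₀ ∧ β = α₀ := by
    intro α β hα hβ h
    have key : ∀ i : Fin m, i ≠ i2 → α i = 0 ∧ β i = 0 := by
      intro i hi
      have he : (D α + D β) (f i) = (Finsupp.single i2 (2 * (q - 1)) : Fin m →₀ ℕ) (f i) := by
        rw [h]
      rw [Finsupp.single_eq_of_ne (hfne i hi), Finsupp.add_apply] at he
      have hle : ∀ γ : Fin m → ℕ, γ i ≤ D γ (f i) := by
        intro γ
        rw [hD]
        dsimp only
        rw [Finsupp.finset_sum_apply]
        have := Finset.single_le_sum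
          (f := fun i' => (Finsupp.single (f i') (γ i') : Fin m →₀ ℕ) (f i))
          (fun _ _ => Nat.zero_le _) (Finset.mem_univ i)
        simpa using this
      constructor
      · have := hle α; omega
      · have := hle β; omega
    exact ⟨hzero α hα (fun i hi => (key i hi).1), hzero β hβ (fun i hi => (key i hi).2)⟩
  have hcα₀ : c α₀ = (q : ℤ) * q := by
    rw [hc]
    dsimp only
    rw [hα₀]
    have e0 := mult_aux (q - 1) i0 i2 h02
    have e1 := mult_aux (q - 1) i1 i2 h12
    rw [e0, e1]
    have : q - 1 + 1 = q := by omega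
    rw [this]
  set T := rename f S with hTdef
  have hSterm : ∀ α : Fin m → ℕ,
      rename f (C (c α) * ∏ i, X i ^ α i) = monomial (D α) (c α) := by
    intro α
    rw [map_mul, rename_C]
    have h1 : rename f (∏ i, (X i : MvPolynomial (Fin m) ℤ) ^ α i)
        = ∏ i, (X (f i) : MvPolynomial (Fin m) ℤ) ^ α i := by
      rw [map_prod]
      simp [map_pow]
    rw [h1]
    have h2 : ∏ i, (X (f i) : MvPolynomial (Fin m) ℤ) ^ α i = monomial (D α) 1 := by
      simp only [X_pow_eq_monomial]
      rw [hD]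
      exact (monomial_sum_one _ _).symm
    rw [h2, C_mul_monomial, mul_one]
  have hT : T = ∑ α ∈ A, monomial (D α) (c α) := by
    rw [hTdef, show S = ∑ α ∈ A, C (c α) * ∏ i, X i ^ α i from rfl, map_sum]
    exact Finset.sum_congr rfl fun α _ => hSterm α
  have hsq : T ^ 2 = ∑ α ∈ A, ∑ β ∈ A, monomial (D α + D β) (c α * c β) := by
    rw [sq, hT, Finset.sum_mul_sum]
    simp only [monomial_mul]
  have hcoeffT : coeff (Finsupp.single i2 (2 * (q - 1))) (T ^ 2) = c α₀ * c α₀ := by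
    rw [hsq, coeff_sum]
    simp only [coeff_sum, coeff_monomial]
    rw [Finset.sum_eq_single_of_mem α₀ hmem, Finset.sum_eq_single_of_mem α₀ hmem,
      if_pos hDD]
    · intro β hβ hne
      rw [if_neg (fun hcon => hne (huniq α₀ β hmem hβ hcon).2)]
    · intro α hα hne
      apply Finset.sum_eq_zero
      intro β hβ
      rw [if_neg (fun hcon => hne (huniq α β hα hβ hcon).1)]
  have hdiag : csqDiag = monomial (Finsupp.single i0 2) (((q : ℤ) + 1) ^ 2) * T ^ 2 := by
    show rename f csq = _
    rw [show csq = C (((q : ℤ) + 1) ^ 2) * X i0 * X i1 * S ^ 2 from rfl]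
    rw [map_mul, map_mul, map_mul, map_pow (rename f) S 2, rename_C, rename_X, rename_X]
    have hf0 : f i0 = i0 := by simp [hf]
    have hf1 : f i1 = i0 := by simp [hf]
    rw [hf0, hf1, mul_assoc (C _), ← sq, C_mul_X_pow_eq_monomial]
  have hmain : MvPolynomial.coeff
      (Finsupp.single i0 2 + Finsupp.single i2 (2 * (q - 1))) csqDiag =
      ((q : ℤ) + 1) ^ 2 * (q : ℤ) ^ 4 := by
    rw [hdiag, coeff_monomial_mul, hcoeffT, hcα₀]
    ring
  refine ⟨hmain, ?_⟩
  rintro p k u hp hk hqu hpu ⟨Q, hQ⟩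
  have hdvd : ((p : ℤ)) ^ (4 * k) ∣ ((q : ℤ) + 1) ^ 2 * (q : ℤ) ^ 4 := by
    rw [← hmain, hQ, coeff_smul, smul_eq_mul]
    exact dvd_mul_right _ _
  have hdvdn : p ^ (4 * k) ∣ (q + 1) ^ 2 * q ^ 4 := by
    have h3 : ((p ^ (4 * k) : ℕ) : ℤ) ∣ (((q + 1) ^ 2 * q ^ 4 : ℕ) : ℤ) := by
      push_cast
      exact hdvd
    exact_mod_cast h3
  have hq1 : (q + 1) ^ 2 = p ^ (2 * k) * u ^ 2 := by
    rw [hqu, mul_pow, ← pow_mul]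
    ring_nf
  have h4 : p ^ (2 * k) * p ^ (2 * k) ∣ p ^ (2 * k) * (u ^ 2 * q ^ 4) := by
    have he : 4 * k = 2 * k + 2 * k := by omega
    calc p ^ (2 * k) * p ^ (2 * k) = p ^ (4 * k) := by rw [he, pow_add]
    _ ∣ (q + 1) ^ 2 * q ^ 4 := hdvdn
    _ = p ^ (2 * k) * (u ^ 2 * q ^ 4) := by rw [hq1]; ring
  have hp0 : p ^ (2 * k) ≠ 0 := pow_ne_zero _ hp.pos.ne'
  have h5 : p ^ (2 * k) ∣ u ^ 2 * q ^ 4 := (mul_dvd_mul_iff_left hp0).mp h4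
  have h6 : p ∣ u ^ 2 * q ^ 4 := dvd_trans (dvd_pow_self p (by omega)) h5
  rcases (Nat.Prime.dvd_mul hp).mp h6 with h | h
  · exact hpu (hp.dvd_of_dvd_pow h)
  · have hpq : p ∣ q := hp.dvd_of_dvd_pow h
    have hpq1 : p ∣ q + 1 := by
      rw [hqu]
      exact Dvd.dvd.mul_right (dvd_pow_self p (by omega)) u
    have h7 : p ∣ 1 := by
      have := Nat.dvd_sub hpq1 hpq
      simpa using this
    have := Nat.le_of_dvd one_pos h7
    have := hp.two_le
    omega
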